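/- Let X be a compact metric space, let h : X → X be a minimal homeomorphism, let Z ⊆ X be a closed universally null set, and let ε > 0. Then there exists an open set U ⊆ X containing Z such that μ(U) < ε for every h-invariant Borel probability measure μ on X. -/

import Mathlib

open MeasureTheory

/-- A Borel set `Z` is universally null for the homeomorphism `h` if `μ Z = 0` for
every `h`-invariant Borel probability measure `μ`. -/
def UniversallyNull {X : Type*} [TopologicalSpace X] [MeasurableSpace X]
    (h : X ≃ₜ X) (Z : Set X) : Prop :=
  ∀ μ : Measure X, IsProbabilityMeasure μ →
    (∀ s : Set X, MeasurableSet s → μ (⇑h ⁻¹' s) = μ s) → μ Z = 0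

open BoundedContinuousFunction NNReal ENNReal Set TopologicalSpace Filter Topology

section Aux

variable {X : Type*} [MetricSpace X] [CompactSpace X]

/-- Compactly supported continuous functions as bounded continuous functions. -/
noncomputable def ccL : CompactlySupportedContinuousMap X ℝ≥0 →ₗ[ℝ≥0] (X →ᵇ ℝ≥0) where
  toFun f := f.toBoundedContinuousFunction
  map_add' f g := by ext; simp
  map_smul' c f := by ext; simp

/-- Bounded continuous functions on a compact space are compactly supported. -/
def bcfToCc (p : X →ᵇ ℝ≥0) : CompactlySupportedContinuousMap X ℝ≥0 :=
  ⟨p.toContinuousMap, HasCompactSupport.of_compactSpace _⟩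

/-- The Riesz content of a positive linear functional is additive on disjoint compacts. -/
lemma myRieszAux_sup_disjoint (Λ : (X →ᵇ ℝ≥0) →ₗ[ℝ≥0] ℝ≥0) (K₁ K₂ : Compacts X)
    (hd : Disjoint (K₁ : Set X) (K₂ : Set X)) :
    rieszContentAux (Λ.comp ccL) (K₁ ⊔ K₂) = rieszContentAux (Λ.comp ccL) K₁ + rieszContentAux (Λ.comp ccL) K₂ := by
  refine le_antisymm (rieszContentAux_sup_le (Λ.comp ccL) K₁ K₂)
    (le_csInf (rieszContentAux_image_nonempty (Λ.comp ccL) _) ?_)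
  rintro b ⟨f, hf, rfl⟩
  obtain ⟨g, hg0, hg1, hg01⟩ :=
    exists_continuous_zero_one_of_isClosed K₂.isCompact.isClosed K₁.isCompact.isClosed hd.symm
  set gN : C(X, ℝ≥0) :=
    ⟨fun x => Real.toNNReal (g x), continuous_real_toNNReal.comp g.continuous⟩ with hgN
  set gN' : C(X, ℝ≥0) :=
    ⟨fun x => Real.toNNReal (1 - g x),
      continuous_real_toNNReal.comp (continuous_const.sub g.continuous)⟩ with hgN'
  set p₁ : X →ᵇ ℝ≥0 := mkOfCompact (f.toContinuousMap * gN) with hp₁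
  set p₂ : X →ᵇ ℝ≥0 := mkOfCompact (f.toContinuousMap * gN') with hp₂
  have hsum : p₁ + p₂ = f := by
    ext x
    refine congrArg NNReal.toReal (?_ : (p₁ + p₂) x = f x)
    show f x * Real.toNNReal (g x) + f x * Real.toNNReal (1 - g x) = f x
    rw [← mul_add, ← Real.toNNReal_add (hg01 x).1 (by linarith [(hg01 x).2])]
    have : g x + (1 - g x) = 1 := by ring
    rw [this, Real.toNNReal_one, mul_one]
  have h1 : rieszContentAux (Λ.comp ccL) K₁ ≤ Λ p₁ := by
    apply rieszContentAux_le (f := bcfToCc p₁)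
    intro x hx
    show 1 ≤ p₁ x
    have hpx : p₁ x = f x := by
      show f x * Real.toNNReal (g x) = f x
      have : g x = 1 := hg1 hx
      rw [this, Real.toNNReal_one, mul_one]
    rw [hpx]
    exact hf x (SetLike.le_def.mp le_sup_left hx)
  have h2 : rieszContentAux (Λ.comp ccL) K₂ ≤ Λ p₂ := by
    apply rieszContentAux_le (f := bcfToCc p₂)
    intro x hx
    show 1 ≤ p₂ x
    have hpx : p₂ x = f x := by
      show f x * Real.toNNReal (1 - g x) = f x
      have : g x = 0 := hg0 hx
      rw [this, sub_zero, Real.toNNReal_one, mul_one]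
    rw [hpx]
    exact hf x (SetLike.le_def.mp le_sup_right hx)
  calc rieszContentAux (Λ.comp ccL) K₁ + rieszContentAux (Λ.comp ccL) K₂ ≤ Λ p₁ + Λ p₂ := add_le_add h1 h2
    _ = Λ (p₁ + p₂) := (map_add Λ p₁ p₂).symm
    _ = Λ f := by rw [hsum]

/-- The Riesz content does not increase under an invariance-compatible homeomorphism. -/
lemma myRieszAux_map_le (Λ : (X →ᵇ ℝ≥0) →ₗ[ℝ≥0] ℝ≥0) (e : X ≃ₜ X)
    (hΛ : ∀ f : X →ᵇ ℝ≥0, Λ (f.compContinuous (e.symm : C(X, X))) = Λ f)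
    (K : Compacts X) :
    rieszContentAux (Λ.comp ccL) (K.map e e.continuous) ≤ rieszContentAux (Λ.comp ccL) K := by
  refine le_csInf (rieszContentAux_image_nonempty (Λ.comp ccL) K) ?_
  rintro b ⟨f, hf, rfl⟩
  show _ ≤ Λ (ccL f)
  rw [← hΛ (ccL f)]
  apply rieszContentAux_le (f := bcfToCc ((ccL f).compContinuous (e.symm : C(X, X))))
  intro x hx
  obtain ⟨y, hy, rfl⟩ : ∃ y ∈ K, e y = x := by
    exact hx
  show (1 : ℝ≥0) ≤ f (e.symm (e y))
  rw [Homeomorph.symm_apply_apply]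
  exact hf y hy

end Aux

/-- Let `X` be a compact metric space, `h : X → X` a minimal
homeomorphism, `Z ⊆ X` a closed universally null set, and `ε > 0`. Then there is an
open set `U ⊇ Z` such that `μ U < ε` for every `h`-invariant Borel probability
measure `μ` on `X`. -/
theorem exists_open_superset_small_invariant_measure
    {X : Type*} [MetricSpace X] [CompactSpace X]
    [MeasurableSpace X] [BorelSpace X]
    (h : X ≃ₜ X)
    (hmin : ∀ x : X, Dense (Set.range fun n : ℤ => (h.toEquiv ^ n) x))
    (Z : Set X) (hZclosed : IsClosed Z) (hZnull : UniversallyNull h Z)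
    (ε : ℝ) (hε : 0 < ε) :
    ∃ U : Set X, IsOpen U ∧ Z ⊆ U ∧
      ∀ μ : Measure X, IsProbabilityMeasure μ →
        (∀ s : Set X, MeasurableSet s → μ (⇑h ⁻¹' s) = μ s) →
        μ U < ENNReal.ofReal ε := by
  by_contra hcon
  push_neg at hcon
  have hthick : ∀ n : ℕ, Z ⊆ Metric.thickening (1/(n+1) : ℝ) Z := fun n =>
    Metric.self_subset_thickening (by positivity) Z
  choose ν hνp hνi hνe using fun n : ℕ =>
    hcon (Metric.thickening (1/(n+1) : ℝ) Z) Metric.isOpen_thickening (hthick n)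
  have hmap : ∀ n, Measure.map h (ν n) = ν n := fun n =>
    Measure.ext fun s hs => by rw [Measure.map_apply h.continuous.measurable hs, hνi n s hs]
  have hmap' : ∀ n, Measure.map h.symm (ν n) = ν n := fun n => by
    conv_lhs => rw [← hmap n]
    rw [Measure.map_map h.symm.continuous.measurable h.continuous.measurable]
    have : (⇑h.symm ∘ ⇑h) = id := funext fun x => h.symm_apply_apply x
    rw [this, Measure.map_id]
  let P : ℕ → FiniteMeasure X := fun n => ⟨ν n, by have := hνp n; infer_instance⟩
  have hPcoe : ∀ n, (P n : Measure X) = ν n := fun n => rfl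
  have hPmass : ∀ n, (P n).mass = 1 := by
    intro n
    haveI := hνp n
    have : ((P n).mass : ℝ≥0∞) = 1 := by
      rw [FiniteMeasure.ennreal_mass, hPcoe n]; exact measure_univ
    exact_mod_cast this
  let 𝒰 : Ultrafilter ℕ := Ultrafilter.of Filter.atTop
  have h𝒰 : (𝒰 : Filter ℕ) ≤ Filter.atTop := Ultrafilter.of_le _
  have hex : ∀ f : X →ᵇ ℝ≥0,
      ∃ a : ℝ≥0, Filter.Tendsto (fun n => (P n).testAgainstNN f) 𝒰 (𝓝 a) := by
    intro f
    have hbd : ∀ n, (P n).testAgainstNN f ∈ Set.Icc 0 (nndist f 0) := by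
      intro n
      refine ⟨zero_le, ?_⟩
      have := (P n).testAgainstNN_lipschitz_estimate f 0
      simpa [FiniteMeasure.zero_testAgainstNN_apply, hPmass n] using this
    have hle : (Ultrafilter.map (fun n => (P n).testAgainstNN f) 𝒰 : Filter ℝ≥0) ≤
        Filter.principal (Set.Icc 0 (nndist f 0)) := by
      rw [Ultrafilter.coe_map, Filter.le_principal_iff]
      exact Filter.mem_map.mpr (Filter.univ_mem' hbd)
    obtain ⟨a, -, ha⟩ := isCompact_Icc.ultrafilter_le_nhds
      (Ultrafilter.map (fun n => (P n).testAgainstNN f) 𝒰) hle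
    exact ⟨a, ha⟩
  choose Λf hΛf using hex
  have hΛadd : ∀ f g : X →ᵇ ℝ≥0, Λf (f + g) = Λf f + Λf g := by
    intro f g
    have h2 : Filter.Tendsto (fun n => (P n).testAgainstNN (f + g)) 𝒰 (𝓝 (Λf f + Λf g)) := by
      simpa [FiniteMeasure.testAgainstNN_add] using (hΛf f).add (hΛf g)
    exact tendsto_nhds_unique (hΛf (f + g)) h2
  have hΛsmul : ∀ (c : ℝ≥0) (f : X →ᵇ ℝ≥0), Λf (c • f) = c • Λf f := by
    intro c f
    have h2 : Filter.Tendsto (fun n => (P n).testAgainstNN (c • f)) 𝒰 (𝓝 (c • Λf f)) := by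
      simp only [FiniteMeasure.testAgainstNN_smul]
      exact (hΛf f).const_smul c
    exact tendsto_nhds_unique (hΛf (c • f)) h2
  let Λ : (X →ᵇ ℝ≥0) →ₗ[ℝ≥0] ℝ≥0 :=
    { toFun := Λf
      map_add' := hΛadd
      map_smul' := hΛsmul }
  have hΛmono : ∀ {f g : X →ᵇ ℝ≥0}, (⇑f ≤ ⇑g) → Λf f ≤ Λf g := fun {f g} hle =>
    le_of_tendsto_of_tendsto' (hΛf f) (hΛf g) fun n => (P n).testAgainstNN_mono hle
  have hΛone : Λf 1 = 1 := by
    have heq : (fun n => (P n).testAgainstNN 1) = fun _ => (1 : ℝ≥0) :=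
      funext fun n => by rw [FiniteMeasure.testAgainstNN_one, hPmass n]
    exact tendsto_nhds_unique (hΛf 1) (heq ▸ tendsto_const_nhds)
  have hΛinvgen : ∀ (e : X ≃ₜ X), (∀ n, Measure.map e (ν n) = ν n) →
      ∀ f : X →ᵇ ℝ≥0, Λf (f.compContinuous (e : C(X, X))) = Λf f := by
    intro e he f
    have key : ∀ n, (P n).testAgainstNN (f.compContinuous (e : C(X, X)))
        = (P n).testAgainstNN f := by
      intro n
      have hmeas : Measurable fun x : X => (f x : ℝ≥0∞) :=
        measurable_coe_nnreal_ennreal.comp f.continuous.measurable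
      have hint : (∫⁻ x, (f (e x) : ℝ≥0∞) ∂(ν n)) = ∫⁻ x, (f x : ℝ≥0∞) ∂(ν n) := by
        conv_rhs => rw [← he n]
        rw [lintegral_map hmeas e.continuous.measurable]
      exact congrArg ENNReal.toNNReal hint
    have h2 : Filter.Tendsto (fun n => (P n).testAgainstNN (f.compContinuous (e : C(X, X))))
        𝒰 (𝓝 (Λf f)) := by
      simp only [key]; exact hΛf f
    exact tendsto_nhds_unique (hΛf _) h2
  have hinv1 : ∀ f : X →ᵇ ℝ≥0, Λ (f.compContinuous (h : C(X, X))) = Λ f :=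
    hΛinvgen h hmap
  have hinv2 : ∀ f : X →ᵇ ℝ≥0, Λ (f.compContinuous (h.symm : C(X, X))) = Λ f :=
    hΛinvgen h.symm hmap'
  let C : Content X :=
    { toFun := rieszContentAux (Λ.comp ccL)
      mono' := fun K₁ K₂ hK => rieszContentAux_mono (Λ.comp ccL) (SetLike.coe_subset_coe.mp hK)
      sup_disjoint' := fun K₁ K₂ hd _ _ => myRieszAux_sup_disjoint Λ K₁ K₂ hd
      sup_le' := fun K₁ K₂ => rieszContentAux_sup_le (Λ.comp ccL) K₁ K₂ }
  have hCapp : ∀ K : Compacts X, (C K : ℝ≥0∞) = (rieszContentAux (Λ.comp ccL) K : ℝ≥0∞) := fun K => rfl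
  have hCmap : ∀ ⦃K : Compacts X⦄, (C (K.map h h.continuous) : ℝ≥0∞) = C K := by
    intro K
    rw [hCapp, hCapp]
    have e1 : rieszContentAux (Λ.comp ccL) (K.map h h.continuous) ≤ rieszContentAux (Λ.comp ccL) K :=
      myRieszAux_map_le Λ h hinv2 K
    have e2 : rieszContentAux (Λ.comp ccL) K ≤ rieszContentAux (Λ.comp ccL) (K.map h h.continuous) := by
      have hsymminv : ∀ f : X →ᵇ ℝ≥0,
          Λ (f.compContinuous (h.symm.symm : C(X, X))) = Λ f := by
        intro f; rw [Homeomorph.symm_symm]; exact hinv1 f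
      have := myRieszAux_map_le Λ h.symm hsymminv (K.map h h.continuous)
      have hKK : (K.map h h.continuous).map h.symm h.symm.continuous = K := by
        apply Compacts.ext
        simp [Compacts.map, Set.image_image]
      rwa [hKK] at this
    exact_mod_cast le_antisymm e1 e2
  set μM : Measure X := C.measure with hμM
  have hμMinv : ∀ s : Set X, MeasurableSet s → μM (⇑h ⁻¹' s) = μM s := by
    intro s hs
    rw [hμM, Content.measure_apply _ (hs.preimage h.continuous.measurable),
      Content.measure_apply _ hs]
    exact C.outerMeasure_preimage h hCmap s
  have hΛtop : rieszContentAux (Λ.comp ccL) ⊤ = 1 := by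
    apply le_antisymm
    · calc rieszContentAux (Λ.comp ccL) ⊤ ≤ Λ 1 := rieszContentAux_le (Λ.comp ccL) (f := bcfToCc 1) (fun x _ => le_rfl)
        _ = 1 := hΛone
    · refine le_csInf (rieszContentAux_image_nonempty (Λ.comp ccL) _) ?_
      rintro b ⟨f, hf, rfl⟩
      have hone : ⇑(1 : X →ᵇ ℝ≥0) ≤ ⇑f := by
        intro x
        simpa using hf x (Set.mem_univ x)
      calc (1 : ℝ≥0) = Λf 1 := hΛone.symm
        _ ≤ Λf (ccL f) := hΛmono (g := ccL f) hone
  have hCtop : (C ⊤ : ℝ≥0∞) = 1 := by rw [hCapp, hΛtop]; simp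
  have hμMuniv : μM Set.univ = 1 := by
    rw [hμM, Content.measure_apply _ MeasurableSet.univ,
      C.outerMeasure_of_isOpen Set.univ isOpen_univ]
    have h1 := C.innerContent_le ⟨Set.univ, isOpen_univ⟩ ⊤ (by simp)
    have h2 := C.le_innerContent ⊤ ⟨Set.univ, isOpen_univ⟩ (by simp)
    rw [hCtop] at h1 h2
    exact le_antisymm h1 h2
  haveI hPM : IsProbabilityMeasure μM := ⟨hμMuniv⟩
  have hlow : ∀ m : ℕ, ENNReal.ofReal ε ≤ μM (Metric.cthickening (1/(m+1) : ℝ) Z) := by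
    intro m
    set δ : ℝ := 1/(m+1) with hδ
    have δpos : 0 < δ := by positivity
    set A : Set X := Metric.cthickening (δ/2) Z with hA
    have hAclosed : IsClosed A := Metric.isClosed_cthickening
    have hAsub : A ⊆ Metric.thickening δ Z :=
      Metric.cthickening_subset_thickening' δpos (half_lt_self δpos) Z
    have hBclosed : IsClosed (Metric.thickening δ Z)ᶜ :=
      Metric.isOpen_thickening.isClosed_compl
    have hdisj : Disjoint (Metric.thickening δ Z)ᶜ A :=
      Set.disjoint_left.mpr fun x hxc hxA => hxc (hAsub hxA)
    obtain ⟨g, hg0, hg1, hg01⟩ :=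
      exists_continuous_zero_one_of_isClosed hBclosed hAclosed hdisj
    set gN : X →ᵇ ℝ≥0 := mkOfCompact
      ⟨fun x => Real.toNNReal (g x), continuous_real_toNNReal.comp g.continuous⟩ with hgNdef
    have hgNapp : ∀ x, gN x = Real.toNNReal (g x) := fun x => rfl
    have hgN1 : ∀ x, gN x ≤ 1 := by
      intro x
      rw [hgNapp]
      calc Real.toNNReal (g x) ≤ Real.toNNReal 1 := Real.toNNReal_mono (hg01 x).2
        _ = 1 := Real.toNNReal_one
    have hc1 : (Real.toNNReal ε : ℝ≥0) ≤ Λf gN := by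
      refine ge_of_tendsto (hΛf gN) ?_
      have hev : ∀ᶠ n in Filter.atTop, Real.toNNReal ε ≤ (P n).testAgainstNN gN := by
        filter_upwards [Filter.eventually_ge_atTop (2*m+1)] with n hn
        haveI := hνp n
        have hsub : Metric.thickening (1/(n+1) : ℝ) Z ⊆ A := by
          refine (Metric.thickening_mono ?_ Z).trans
            (Metric.thickening_subset_cthickening _ _)
          have hnn : (2*(m+1) : ℝ) ≤ (n+1 : ℝ) := by
            have : (2*m+1 : ℕ) ≤ n := hn
            push_cast
            have : (2*(m:ℝ)+1) ≤ n := by exact_mod_cast this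
            linarith
          calc (1/(n+1) : ℝ) ≤ 1/(2*(m+1)) :=
                one_div_le_one_div_of_le (by positivity) hnn
            _ = δ/2 := by
                rw [hδ, div_div]
                congr 1
                ring
        have hAn : ENNReal.ofReal ε ≤ ν n A := le_trans (hνe n) (measure_mono hsub)
        have hint : ENNReal.ofReal ε ≤ ∫⁻ x, (gN x : ℝ≥0∞) ∂(ν n) := by
          calc ENNReal.ofReal ε ≤ ν n A := hAn
            _ = ∫⁻ x, A.indicator (fun _ => (1:ℝ≥0∞)) x ∂(ν n) :=
              (lintegral_indicator_one hAclosed.measurableSet).symm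
            _ ≤ ∫⁻ x, (gN x : ℝ≥0∞) ∂(ν n) := by
              refine lintegral_mono fun x => ?_
              by_cases hx : x ∈ A
              · have : gN x = 1 := by
                  rw [hgNapp]
                  have : g x = 1 := hg1 hx
                  rw [this, Real.toNNReal_one]
                simp [hx, this]
              · simp [hx]
        have hfin : (∫⁻ x, (gN x : ℝ≥0∞) ∂(ν n)) ≠ ⊤ := by
          have hle1 : (∫⁻ x, (gN x : ℝ≥0∞) ∂(ν n)) ≤ ∫⁻ _, (1:ℝ≥0∞) ∂(ν n) :=
            lintegral_mono fun x => by simpa using ENNReal.coe_le_coe.mpr (hgN1 x)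
          rw [lintegral_one, measure_univ] at hle1
          exact ne_top_of_le_ne_top one_ne_top hle1
        have := ENNReal.toNNReal_mono hfin hint
        simpa [FiniteMeasure.testAgainstNN, hPcoe n, ENNReal.ofReal] using this
      exact Filter.Eventually.filter_mono h𝒰 hev
    have hc2 : Λf gN ≤ rieszContentAux (Λ.comp ccL)
        ⟨Metric.cthickening δ Z, (Metric.isClosed_cthickening).isCompact⟩ := by
      refine le_csInf (rieszContentAux_image_nonempty (Λ.comp ccL) _) ?_
      rintro b ⟨f, hf, rfl⟩
      refine hΛmono (g := ccL f) fun x => ?_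
      by_cases hx : x ∈ Metric.thickening δ Z
      · have hx' : x ∈ Metric.cthickening δ Z := Metric.thickening_subset_cthickening δ Z hx
        calc gN x ≤ 1 := hgN1 x
          _ ≤ f x := hf x hx'
      · have : gN x = 0 := by
          rw [hgNapp]
          have : g x = 0 := hg0 hx
          rw [this, Real.toNNReal_zero]
        rw [this]
        exact zero_le
    have hc3 : ((rieszContentAux (Λ.comp ccL)
        ⟨Metric.cthickening δ Z, (Metric.isClosed_cthickening).isCompact⟩ : ℝ≥0) : ℝ≥0∞)
        ≤ μM (Metric.cthickening δ Z) := by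
      rw [hμM, Content.measure_apply _ (Metric.isClosed_cthickening).measurableSet]
      exact C.le_outerMeasure_compacts _
    calc ENNReal.ofReal ε = ((Real.toNNReal ε : ℝ≥0) : ℝ≥0∞) := rfl
      _ ≤ ((Λf gN : ℝ≥0) : ℝ≥0∞) := ENNReal.coe_le_coe.mpr hc1
      _ ≤ _ := le_trans (ENNReal.coe_le_coe.mpr hc2) hc3
  have hZ0 : μM Z = 0 := hZnull μM hPM hμMinv
  have hseq : Filter.Tendsto (fun m : ℕ => (1/(m+1) : ℝ)) Filter.atTop (𝓝 0) :=
    tendsto_one_div_add_atTop_nhds_zero_nat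
  have htend := (tendsto_measure_cthickening_of_isClosed (μ := μM)
    ⟨1, one_pos, measure_ne_top μM _⟩ hZclosed).comp hseq
  rw [hZ0] at htend
  have hfinal : ENNReal.ofReal ε ≤ 0 :=
    ge_of_tendsto htend (Filter.Eventually.of_forall fun m => hlow m)
  exact (not_le.mpr (ENNReal.ofReal_pos.mpr hε)) hfinal
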